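/- Let Delta >= 2 be an integer, let i >= 0 be an integer, and let K be a real number with K >= 320 * ln(Delta) and q = K * 2^i / (4*Delta) <= 1. Let S be a finite set with |S| >= Delta / 2^i, and sample each element of S independently with probability q. Then the probability that fewer than K/8 elements of S are sampled is at most Delta^{-10}. -/

import Mathlib

open MeasureTheory ProbabilityTheory

/-- Probabilistic core of part (B) of the warm-up lemma: if every element of a set
`S` with `|S| ≥ Δ/2^i` is sampled independently with probability
`q = K·2^i/(4Δ) ≤ 1`, where `K ≥ 320 ln Δ`, then the probability that fewer than
`K/8` elements are sampled is at most `Δ⁻¹⁰`. -/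
theorem sampled_degree_lower_bound
    (Δ : ℕ) (hΔ : 2 ≤ Δ) (i : ℕ)
    (K : ℝ) (hK : 320 * Real.log Δ ≤ K)
    (q : ℝ) (hq : q = K * 2 ^ i / (4 * Δ)) (hq1 : q ≤ 1)
    {α : Type*} (S : Finset α) (hS : (Δ : ℝ) / 2 ^ i ≤ S.card)
    {Ω : Type*} [MeasurableSpace Ω] (μ : Measure Ω) [IsProbabilityMeasure μ]
    (B : {a // a ∈ S} → Ω → Bool)
    (hmeas : ∀ a, Measurable (B a))
    (hind : iIndepFun B μ)
    (hprob : ∀ a, μ {ω | B a ω = true} = ENNReal.ofReal q) :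
    μ {ω | ((Finset.univ.filter (fun a : {a // a ∈ S} => B a ω = true)).card : ℝ)
        < K / 8}
      ≤ ((Δ : ENNReal))⁻¹ ^ 10 := by
  classical
  set n := S.card with hn
  have hΔ0 : (0:ℝ) < Δ := by positivity
  have hΔ1 : (1:ℝ) < Δ := by exact_mod_cast hΔ
  have hlogΔ : 0 < Real.log Δ := Real.log_pos hΔ1
  have hK0 : 0 < K := lt_of_lt_of_le (by positivity) hK
  have hq0 : 0 ≤ q := by rw [hq]; positivity
  -- indicator variables
  set Y : {a // a ∈ S} → Ω → ℝ := fun a ω => if B a ω then 1 else 0 with hY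
  have hYmeas : ∀ a, Measurable (Y a) := fun a =>
    (measurable_from_top (f := fun b : Bool => if b then (1:ℝ) else 0)).comp (hmeas a)
  have hYind : iIndepFun Y μ :=
    hind.comp (fun _ b => if b then (1:ℝ) else 0) (fun _ => measurable_from_top)
  set t : ℝ := -Real.log 2 with ht
  have ht0 : t ≤ 0 := by
    have := Real.log_pos (by norm_num : (1:ℝ) < 2); simp [ht]; linarith
  have hexpt : Real.exp t = 2⁻¹ := by
    rw [ht, Real.exp_neg, Real.exp_log two_pos]
  -- per-variable exponential moment
  have hfun : ∀ a, (fun ω => Real.exp (t * Y a ω)) =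
      fun ω => Set.indicator {ω | B a ω = true} (fun _ => (2⁻¹ - 1 : ℝ)) ω + 1 := by
    intro a
    funext ω
    by_cases h : B a ω = true <;>
      simp [hY, h, Set.indicator, hexpt, Real.exp_zero]
  have hint : ∀ a, Integrable (fun ω => Real.exp (t * Y a ω)) μ := by
    intro a
    rw [hfun a]
    exact ((integrable_const _).indicator ((hmeas a) (measurableSet_singleton true))).add
      (integrable_const 1)
  have hmgf : ∀ a, mgf (Y a) μ t = 1 - q / 2 := by
    intro a
    have hAmeas : MeasurableSet {ω | B a ω = true} := (hmeas a) (measurableSet_singleton true)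
    rw [mgf, hfun a, integral_add ((integrable_const _).indicator hAmeas) (integrable_const 1),
      integral_indicator_const _ hAmeas, integral_const]
    simp [hprob a, ENNReal.toReal_ofReal hq0, smul_eq_mul]
    rw [measureReal_def, hprob a, ENNReal.toReal_ofReal hq0]
    ring
  -- the sum
  set X : Ω → ℝ := ∑ a : {a // a ∈ S}, Y a with hX
  have hXint : Integrable (fun ω => Real.exp (t * X ω)) μ :=
    hYind.integrable_exp_mul_sum hYmeas (fun a _ => hint a)
  have hmgfX : mgf X μ t = (1 - q / 2) ^ n := by
    rw [hX, hYind.mgf_sum hYmeas]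
    simp [hmgf, Finset.prod_const, Fintype.card_coe, hn]
  -- Chernoff
  have hchern : (μ {ω | X ω ≤ K / 8}).toReal ≤ Real.exp (-t * (K/8)) * (1 - q/2) ^ n := by
    have := measure_le_le_exp_mul_mgf (μ := μ) (X := X) (t := t) (K/8) ht0 hXint
    rwa [hmgfX] at this
  -- event inclusion
  have hsub : {ω | ((Finset.univ.filter (fun a : {a // a ∈ S} => B a ω = true)).card : ℝ)
      < K / 8} ⊆ {ω | X ω ≤ K / 8} := by
    intro ω hω
    have hcard : X ω = ((Finset.univ.filter (fun a : {a // a ∈ S} => B a ω = true)).card : ℝ) := by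
      rw [hX, Finset.sum_apply, Finset.card_filter]
      push_cast
      simp [hY]
    simp only [Set.mem_setOf_eq] at hω ⊢
    rw [hcard]; linarith
  -- numeric bounds
  have hq2 : (0:ℝ) ≤ 1 - q / 2 := by linarith
  have hbase : (1 - q/2 : ℝ) ≤ Real.exp (-(q/2)) := by
    have := Real.add_one_le_exp (-(q/2)); linarith
  have hpow : (1 - q/2 : ℝ) ^ n ≤ Real.exp (-(q/2) * n) := by
    calc (1 - q/2 : ℝ) ^ n ≤ (Real.exp (-(q/2))) ^ n := pow_le_pow_left₀ hq2 hbase n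
      _ = Real.exp (-(q/2) * n) := by rw [← Real.exp_nat_mul]; ring_nf
  have hqn : K / 4 ≤ q * n := by
    have h1 : q * ((Δ:ℝ) / 2 ^ i) ≤ q * n := mul_le_mul_of_nonneg_left hS hq0
    have h2 : q * ((Δ:ℝ) / 2 ^ i) = K / 4 := by
      rw [hq]; field_simp
    linarith
  have hstep : Real.exp (-(q/2) * n) ≤ Real.exp (-(K/8)) := by
    apply Real.exp_le_exp.mpr; nlinarith
  have hlog2 : Real.log 2 < 0.6931471808 := Real.log_two_lt_d9
  have hfinal : Real.exp (-t * (K/8)) * Real.exp (-(K/8)) ≤ ((Δ:ℝ)⁻¹) ^ 10 := by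
    rw [← Real.exp_add]
    have h10 : ((Δ:ℝ)⁻¹) ^ 10 = Real.exp (-(10 * Real.log Δ)) := by
      rw [Real.exp_neg, inv_pow]
      congr 1
      rw [show (10:ℝ) * Real.log Δ = ((10:ℕ):ℝ) * Real.log Δ by norm_num,
        Real.exp_nat_mul, Real.exp_log hΔ0]
    rw [h10]
    apply Real.exp_le_exp.mpr
    rw [ht]
    nlinarith
  -- combine
  have hR : (μ {ω | ((Finset.univ.filter (fun a : {a // a ∈ S} => B a ω = true)).card : ℝ)
      < K / 8}).toReal ≤ ((Δ:ℝ)⁻¹) ^ 10 := by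
    calc (μ _).toReal ≤ (μ {ω | X ω ≤ K / 8}).toReal := by
          exact ENNReal.toReal_mono (measure_ne_top μ _) (measure_mono hsub)
      _ ≤ Real.exp (-t * (K/8)) * (1 - q/2) ^ n := hchern
      _ ≤ Real.exp (-t * (K/8)) * Real.exp (-(K/8)) := by
          apply mul_le_mul_of_nonneg_left (hpow.trans hstep) (Real.exp_nonneg _)
      _ ≤ ((Δ:ℝ)⁻¹) ^ 10 := hfinal
  have := (ENNReal.le_ofReal_iff_toReal_le (measure_ne_top μ _) (by positivity)).mpr hR
  refine this.trans (le_of_eq ?_)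
  rw [ENNReal.ofReal_pow (by positivity), ENNReal.ofReal_inv_of_pos hΔ0,
    ENNReal.ofReal_natCast]
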